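/- Let T = (V,E) be a finite tree with a distinguished root o, β ≥ 0, and B : V → ℝ with B_v ≥ 0 for all v, and let ν be the Ising measure on T with parameters β, B. For t ≥ 1 let ν_t denote ν conditioned on the event { x_v = +1 for all v ∈ V with d(o,v) ≥ t }. Then for every neighbor i of o and every t ≥ 1, ⟨x_o·x_i⟩_{ν_{t+1}} ≤ ⟨x_o·x_i⟩_{ν_t}. -/

import Mathlib

set_option linter.unusedSectionVars false


open Real Finset
open scoped symmDiff

attribute [local instance] Classical.propDecidable

/-- spin value of a Boolean: `true ↦ +1`, `false ↦ -1`. -/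
def spin (b : Bool) : ℝ := if b then 1 else -1

/-- the product `x_i x_j` of the spins at the two endpoints of an edge. -/
def edgeTerm {V : Type} (x : V → Bool) : Sym2 V → ℝ :=
  Sym2.lift ⟨fun i j => spin (x i) * spin (x j), fun i j => by ring⟩

variable {V : Type} [Fintype V]

/-- Ising Hamiltonian `β Σ_{(i,j)∈E} x_i x_j + Σ_i B_i x_i`. -/
noncomputable def ham (G : SimpleGraph V) (β : ℝ) (B : V → ℝ) (x : V → Bool) : ℝ :=
  β * ∑ e ∈ G.edgeFinset, edgeTerm x e + ∑ v, B v * spin (x v)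

/-- expectation `⟨f⟩` under the Ising measure `ν^{β,B}_G` conditioned on the event
`{x_v = +1 for all v with d(o,v) ≥ t}` (plus boundary condition outside the
ball of radius `t-1` around `o`). -/
noncomputable def plusCondExp (G : SimpleGraph V) (β : ℝ) (B : V → ℝ)
    (o : V) (t : ℕ) (f : (V → Bool) → ℝ) : ℝ :=
  (∑ x : V → Bool,
      if ∀ v, t ≤ G.dist o v → x v = true then f x * Real.exp (ham G β B x) else 0) /
    (∑ x : V → Bool,
      if ∀ v, t ≤ G.dist o v → x v = true then Real.exp (ham G β B x) else 0)


namespace GKSaux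
variable {V : Type} [Fintype V]

lemma spin_cases (b : Bool) : spin b = 1 ∨ spin b = -1 := by cases b <;> simp [spin]

lemma spin_beq (a b : Bool) : spin (a == b) = spin a * spin b := by
  cases a <;> cases b <;> norm_num [spin]

lemma spin_sq (b : Bool) : spin b * spin b = 1 := by cases b <;> norm_num [spin]

/-- character `x ↦ ∏_{v ∈ A} x_v` -/
noncomputable def chi (A : Finset V) (x : V → Bool) : ℝ := ∏ v ∈ A, spin (x v)

lemma chi_empty (x : V → Bool) : chi (∅ : Finset V) x = 1 := by simp [chi]

lemma chi_sq (A : Finset V) (x : V → Bool) : chi A x * chi A x = 1 := by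
  rw [chi, ← Finset.prod_mul_distrib]
  exact Finset.prod_eq_one fun v _ => spin_sq _

lemma chi_cases (A : Finset V) (x : V → Bool) : chi A x = 1 ∨ chi A x = -1 :=
  mul_self_eq_one_iff.mp (chi_sq A x)

lemma chi_le_one (A : Finset V) (x : V → Bool) : chi A x ≤ 1 := by
  rcases chi_cases A x with h | h <;> rw [h] <;> norm_num

lemma chi_mul_chi (A B : Finset V) (x : V → Bool) :
    chi A x * chi B x = chi (A ∆ B) x := by
  classical
  have hA : chi A x = chi (A \ B) x * chi (A ∩ B) x := by
    rw [chi, chi, chi, ← Finset.prod_union (Finset.sdiff_disjoint.mono_right Finset.inter_subset_right)]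
    congr 1
    rw [Finset.sdiff_union_inter]
  have hB : chi B x = chi (B \ A) x * chi (A ∩ B) x := by
    rw [chi, chi, chi, ← Finset.prod_union (Finset.sdiff_disjoint.mono_right Finset.inter_subset_left)]
    congr 1
    rw [Finset.inter_comm, Finset.sdiff_union_inter]
  have hs : chi (A ∆ B) x = chi (A \ B) x * chi (B \ A) x := by
    rw [chi, chi, chi, ← Finset.prod_union (disjoint_sdiff_sdiff)]
    rfl
  rw [hA, hB, hs]
  have h2 := chi_sq (A ∩ B) x
  linear_combination (chi (A \ B) x * chi (B \ A) x) * h2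

/-- pointwise product of configurations (spin multiplication) -/
def cmul (x ε : V → Bool) : V → Bool := fun v => x v == ε v

lemma chi_cmul (A : Finset V) (x ε : V → Bool) :
    chi A (cmul x ε) = chi A x * chi A ε := by
  rw [chi, chi, chi, ← Finset.prod_mul_distrib]
  exact Finset.prod_congr rfl fun v _ => spin_beq _ _

lemma cmul_bijective (x : V → Bool) : Function.Bijective (cmul x) := by
  have h : Function.Involutive (cmul x) := by
    intro ε; funext v; simp [cmul]
  exact h.bijective

lemma sum_chi_nonneg (A : Finset V) : 0 ≤ ∑ x : V → Bool, chi A x := by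
  classical
  rcases A.eq_empty_or_nonempty with rfl | ⟨v₀, hv₀⟩
  · simp [chi_empty]
  · have hflip : ∀ x : V → Bool,
        chi A (Function.update x v₀ (!(x v₀))) = - chi A x := by
      intro x
      rw [chi, chi, ← Finset.mul_prod_erase A _ hv₀, ← Finset.mul_prod_erase A _ hv₀]
      have h1 : ∀ v ∈ A.erase v₀, spin ((Function.update x v₀ (!(x v₀))) v) = spin (x v) := by
        intro v hv
        rw [Function.update_of_ne (Finset.ne_of_mem_erase hv)]
      rw [Finset.prod_congr rfl h1, Function.update_self]
      have : spin (!(x v₀)) = - spin (x v₀) := by cases x v₀ <;> norm_num [spin]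
      rw [this]; ring
    have hbij : Function.Bijective (fun x : V → Bool => Function.update x v₀ (!(x v₀))) := by
      have h : Function.Involutive (fun x : V → Bool => Function.update x v₀ (!(x v₀))) := by
        intro x; funext v
        rcases eq_or_ne v v₀ with rfl | hv
        · simp
        · simp [Function.update_of_ne hv]
      exact h.bijective
    have := Function.Bijective.sum_comp hbij (chi A)
    have h0 : ∑ x : V → Bool, chi A x = - ∑ x : V → Bool, chi A x := by
      calc ∑ x : V → Bool, chi A x
          = ∑ x : V → Bool, chi A (Function.update x v₀ (!(x v₀))) := this.symm
        _ = ∑ x : V → Bool, - chi A x := by exact Finset.sum_congr rfl fun x _ => hflip x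
        _ = - ∑ x : V → Bool, chi A x := by rw [Finset.sum_neg_distrib]
    linarith
end GKSaux

namespace GKSaux
variable {V : Type} [Fintype V]

/-- the cone of nonnegative combinations of characters -/
def Cone (f : (V → Bool) → ℝ) : Prop :=
  ∃ c : Finset V → ℝ, (∀ A, 0 ≤ c A) ∧ ∀ x, f x = ∑ A : Finset V, c A * chi A x

lemma gks1 {f : (V → Bool) → ℝ} (hf : Cone f) (D : Finset V) :
    0 ≤ ∑ x : V → Bool, chi D x * f x := by
  obtain ⟨c, hc, hrep⟩ := hf
  have key : ∑ x : V → Bool, chi D x * f x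
      = ∑ A : Finset V, c A * ∑ x : V → Bool, chi (D ∆ A) x := by
    calc ∑ x : V → Bool, chi D x * f x
        = ∑ x : V → Bool, ∑ A : Finset V, c A * (chi D x * chi A x) := by
          refine Finset.sum_congr rfl fun x _ => ?_
          rw [hrep x, Finset.mul_sum]
          exact Finset.sum_congr rfl fun A _ => by ring
      _ = ∑ A : Finset V, ∑ x : V → Bool, c A * (chi D x * chi A x) := Finset.sum_comm
      _ = ∑ A : Finset V, c A * ∑ x : V → Bool, chi (D ∆ A) x := by
          refine Finset.sum_congr rfl fun A _ => ?_
          rw [Finset.mul_sum]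
          exact Finset.sum_congr rfl fun x _ => by rw [chi_mul_chi]
  rw [key]
  exact Finset.sum_nonneg fun A _ => mul_nonneg (hc A) (sum_chi_nonneg _)

lemma cone_smul_chi (a : ℝ) (ha : 0 ≤ a) (C : Finset V) :
    Cone (fun x => a * chi C x) := by
  classical
  refine ⟨fun A => if A = C then a else 0, fun A => by positivity, fun x => ?_⟩
  rw [Finset.sum_congr rfl (fun A _ => by rw [ite_mul, zero_mul]), Finset.sum_ite_eq' Finset.univ C (fun A => a * chi A x)]
  simp

lemma cone_const (a : ℝ) (ha : 0 ≤ a) : Cone (fun _ : V → Bool => a) := by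
  have := cone_smul_chi a ha (∅ : Finset V)
  simpa [chi_empty] using this

lemma cone_add {f g : (V → Bool) → ℝ} (hf : Cone f) (hg : Cone g) :
    Cone (fun x => f x + g x) := by
  obtain ⟨c, hc, hcr⟩ := hf
  obtain ⟨d, hd, hdr⟩ := hg
  exact ⟨fun A => c A + d A, fun A => add_nonneg (hc A) (hd A),
    fun x => by show f x + g x = _; rw [hcr, hdr, ← Finset.sum_add_distrib]; exact Finset.sum_congr rfl fun A _ => by ring⟩

lemma cone_mul {f g : (V → Bool) → ℝ} (hf : Cone f) (hg : Cone g) :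
    Cone (fun x => f x * g x) := by
  classical
  obtain ⟨c, hc, hcr⟩ := hf
  obtain ⟨d, hd, hdr⟩ := hg
  refine ⟨fun C => ∑ A : Finset V, c A * d (A ∆ C),
    fun C => Finset.sum_nonneg fun A _ => mul_nonneg (hc A) (hd _), fun x => ?_⟩
  show f x * g x = _
  have hcalc : ∑ C : Finset V, (∑ A : Finset V, c A * d (A ∆ C)) * chi C x = f x * g x := by
    calc ∑ C : Finset V, (∑ A : Finset V, c A * d (A ∆ C)) * chi C x
        = ∑ C : Finset V, ∑ A : Finset V, c A * d (A ∆ C) * chi C x := by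
          exact Finset.sum_congr rfl fun C _ => Finset.sum_mul _ _ _
      _ = ∑ A : Finset V, ∑ C : Finset V, c A * d (A ∆ C) * chi C x := Finset.sum_comm
      _ = ∑ A : Finset V, ∑ B : Finset V, c A * d (A ∆ (A ∆ B)) * chi (A ∆ B) x := by
          refine Finset.sum_congr rfl fun A _ => ?_
          have hinv : Function.Involutive (fun B : Finset V => A ∆ B) :=
            fun B => symmDiff_symmDiff_cancel_left A B
          have hbij := hinv.bijective
          exact (Function.Bijective.sum_comp hbij
            (fun C => c A * d (A ∆ C) * chi C x)).symm
      _ = ∑ A : Finset V, ∑ B : Finset V, (c A * chi A x) * (d B * chi B x) := by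
          refine Finset.sum_congr rfl fun A _ => Finset.sum_congr rfl fun B _ => ?_
          rw [symmDiff_symmDiff_cancel_left, ← chi_mul_chi]
          ring
      _ = (∑ A : Finset V, c A * chi A x) * (∑ B : Finset V, d B * chi B x) :=
          (Finset.sum_mul_sum _ _ _ _).symm
      _ = f x * g x := by rw [hcr, hdr]
  exact hcalc.symm

lemma cone_one : Cone (fun _ : V → Bool => (1:ℝ)) := cone_const 1 zero_le_one

end GKSaux

namespace GKSaux
variable {V : Type} [Fintype V]

/-- `W(x) W(xε)` lies in the cone for every `ε` (Ginibre condition). -/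
def Paired (W : (V → Bool) → ℝ) : Prop :=
  ∀ ε : V → Bool, Cone (fun x => W x * W (cmul x ε))

lemma paired_factor (C : Finset V) {a b : ℝ} (hb : 0 ≤ b) (hba : b ≤ a) :
    Paired (fun x => a + b * chi C x) := by
  intro ε
  have ha : 0 ≤ a := hb.trans hba
  have h1 : ∀ x : V → Bool,
      (a + b * chi C x) * (a + b * chi C (cmul x ε))
        = (a * a + b * b * chi C ε) + (a * b * (1 + chi C ε)) * chi C x := by
    intro x
    rw [chi_cmul]
    have h0 := chi_sq C x
    linear_combination (b * b * chi C ε) * h0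
  have hc1 : 0 ≤ a * a + b * b * chi C ε := by
    rcases chi_cases C ε with h | h <;> rw [h] <;> nlinarith
  have hc2 : 0 ≤ a * b * (1 + chi C ε) := by
    rcases chi_cases C ε with h | h <;> rw [h] <;> nlinarith
  have := cone_add (cone_const _ hc1) (cone_smul_chi _ hc2 C)
  convert this using 1
  funext x
  rw [h1 x]

lemma paired_mul {f g : (V → Bool) → ℝ} (hf : Paired f) (hg : Paired g) :
    Paired (fun x => f x * g x) := by
  intro ε
  have := cone_mul (hf ε) (hg ε)
  convert this using 1
  funext x
  show f x * g x * (f (cmul x ε) * g (cmul x ε)) = _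
  ring

lemma paired_one : Paired (fun _ : V → Bool => (1:ℝ)) := by
  intro ε
  have := cone_one (V := V)
  convert this using 1
  funext x
  norm_num

lemma paired_prod {ι : Type*} (s : Finset ι) (F : ι → (V → Bool) → ℝ) :
    (∀ k ∈ s, Paired (F k)) →
    Paired (fun x => ∏ k ∈ s, F k x) := by
  classical
  induction s using Finset.induction_on with
  | empty => intro _; simpa using paired_one
  | @insert a s' hk ih =>
    intro h
    have h1 : Paired (F a) := h a (Finset.mem_insert_self a s')
    have h2 : Paired (fun x => ∏ k ∈ s', F k x) :=
      ih fun k hks => h k (Finset.mem_insert_of_mem hks)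
    have := paired_mul h1 h2
    convert this using 1
    funext x
    rw [Finset.prod_insert hk]

/-- GKS second inequality for a paired weight. -/
lemma gks2 {W : (V → Bool) → ℝ} (hW : Paired W) (D A : Finset V) :
    (∑ x : V → Bool, chi D x * W x) * (∑ y : V → Bool, chi A y * W y) ≤
      (∑ x : V → Bool, chi D x * chi A x * W x) * (∑ y : V → Bool, W y) := by
  set S0 := ∑ y : V → Bool, W y with hS0
  set S1 := ∑ x : V → Bool, chi D x * W x with hS1
  set S2 := ∑ y : V → Bool, chi A y * W y with hS2
  set S3 := ∑ x : V → Bool, chi D x * chi A x * W x with hS3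
  have key : 0 ≤ ∑ x : V → Bool, ∑ y : V → Bool,
      (chi D x - chi D y) * (chi A x - chi A y) * (W x * W y) := by
    have hre : ∀ x : V → Bool, ∑ y : V → Bool,
        (chi D x - chi D y) * (chi A x - chi A y) * (W x * W y)
        = ∑ ε : V → Bool,
        (chi D x - chi D (cmul x ε)) * (chi A x - chi A (cmul x ε)) * (W x * W (cmul x ε)) := by
      intro x
      exact (Function.Bijective.sum_comp (cmul_bijective x)
        (fun y => (chi D x - chi D y) * (chi A x - chi A y) * (W x * W y))).symm
    rw [Finset.sum_congr rfl fun x _ => hre x, Finset.sum_comm]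
    refine Finset.sum_nonneg fun ε _ => ?_
    have heq : ∀ x : V → Bool,
        (chi D x - chi D (cmul x ε)) * (chi A x - chi A (cmul x ε)) * (W x * W (cmul x ε))
        = ((1 - chi D ε) * (1 - chi A ε)) * (chi (D ∆ A) x * (W x * W (cmul x ε))) := by
      intro x
      rw [chi_cmul, chi_cmul, ← chi_mul_chi]
      ring
    rw [Finset.sum_congr rfl fun x _ => heq x, ← Finset.mul_sum]
    have h1 : 0 ≤ (1 - chi D ε) * (1 - chi A ε) :=
      mul_nonneg (by linarith [chi_le_one D ε]) (by linarith [chi_le_one A ε])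
    exact mul_nonneg h1 (gks1 (hW ε) (D ∆ A))
  have expand : ∑ x : V → Bool, ∑ y : V → Bool,
      (chi D x - chi D y) * (chi A x - chi A y) * (W x * W y)
      = S3 * S0 - S1 * S2 - S2 * S1 + S0 * S3 := by
    have h1 : ∀ x y : V → Bool,
        (chi D x - chi D y) * (chi A x - chi A y) * (W x * W y)
        = (chi D x * chi A x * W x) * W y - (chi D x * W x) * (chi A y * W y)
          - (chi A x * W x) * (chi D y * W y) + W x * (chi D y * chi A y * W y) := by
      intro x y; ring
    calc ∑ x : V → Bool, ∑ y : V → Bool,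
          (chi D x - chi D y) * (chi A x - chi A y) * (W x * W y)
        = ∑ x : V → Bool, ∑ y : V → Bool,
          ((chi D x * chi A x * W x) * W y - (chi D x * W x) * (chi A y * W y)
          - (chi A x * W x) * (chi D y * W y) + W x * (chi D y * chi A y * W y)) := by
          exact Finset.sum_congr rfl fun x _ => Finset.sum_congr rfl fun y _ => h1 x y
      _ = S3 * S0 - S1 * S2 - S2 * S1 + S0 * S3 := by
          simp only [Finset.sum_add_distrib, Finset.sum_sub_distrib,
            ← Finset.sum_mul, ← Finset.mul_sum]
          rw [hS0, hS1, hS2, hS3]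
  rw [expand] at key
  linarith

end GKSaux

namespace GKSaux
variable {V : Type} [Fintype V]

lemma cone_prod {ι : Type*} (s : Finset ι) (F : ι → (V → Bool) → ℝ) :
    (∀ k ∈ s, Cone (F k)) → Cone (fun x => ∏ k ∈ s, F k x) := by
  classical
  induction s using Finset.induction_on with
  | empty => intro _; simpa using cone_one
  | @insert a s' hk ih =>
    intro h
    have h1 : Cone (F a) := h a (Finset.mem_insert_self a s')
    have h2 : Cone (fun x => ∏ k ∈ s', F k x) :=
      ih fun k hks => h k (Finset.mem_insert_of_mem hks)
    have := cone_mul h1 h2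
    convert this using 1
    funext x
    rw [Finset.prod_insert hk]

lemma prod_ind (S : Finset V) (x : V → Bool) :
    ∏ v ∈ S, ((1 + spin (x v)) / 2) = if ∀ v ∈ S, x v = true then 1 else 0 := by
  by_cases h : ∀ v ∈ S, x v = true
  · rw [if_pos h]
    exact Finset.prod_eq_one fun v hv => by rw [h v hv]; norm_num [spin]
  · rw [if_neg h]
    push_neg at h
    obtain ⟨v, hv, hxv⟩ := h
    refine Finset.prod_eq_zero hv ?_
    have hx : x v = false := by simpa using hxv
    rw [hx]; norm_num [spin]

lemma edgeTerm_cases (x : V → Bool) (e : Sym2 V) :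
    edgeTerm x e = 1 ∨ edgeTerm x e = -1 := by
  induction e using Sym2.ind with
  | _ u w =>
    rcases spin_cases (x u) with h1 | h1 <;> rcases spin_cases (x w) with h2 | h2 <;>
      simp [edgeTerm, h1, h2]

lemma exp_pm (c y : ℝ) (hy : y = 1 ∨ y = -1) :
    Real.exp (c * y) = Real.cosh c + Real.sinh c * y := by
  rcases hy with rfl | rfl
  · rw [mul_one, mul_one, Real.cosh_add_sinh]
  · have := Real.cosh_sub_sinh c
    rw [mul_neg_one, mul_neg_one, ← sub_eq_add_neg, this]

lemma sinh_nonneg' {c : ℝ} (hc : 0 ≤ c) : 0 ≤ Real.sinh c := by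
  rw [Real.sinh_eq]
  have := Real.exp_le_exp.mpr (neg_le_self hc)
  linarith

lemma sinh_le_cosh' (c : ℝ) : Real.sinh c ≤ Real.cosh c := by
  have h := Real.cosh_sub_sinh c
  have := Real.exp_pos (-c)
  linarith

lemma exp_ham (T : SimpleGraph V) (β : ℝ) (B : V → ℝ) (x : V → Bool) :
    Real.exp (ham T β B x)
      = (∏ e ∈ T.edgeFinset, (Real.cosh β + Real.sinh β * edgeTerm x e)) *
        ∏ v : V, (Real.cosh (B v) + Real.sinh (B v) * spin (x v)) := by
  rw [ham, Real.exp_add, Finset.mul_sum, Real.exp_sum, Real.exp_sum]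
  congr 1
  · exact Finset.prod_congr rfl fun e _ => exp_pm β _ (edgeTerm_cases x e)
  · exact Finset.prod_congr rfl fun v _ => exp_pm (B v) _ (spin_cases (x v))

lemma edgeTerm_eq_chi (e : Sym2 V) (he : ¬ e.IsDiag) :
    ∃ u w : V, u ≠ w ∧ ∀ x : V → Bool, edgeTerm x e = chi {u, w} x := by
  induction e using Sym2.ind with
  | _ u w =>
    have hne : u ≠ w := by simpa [Sym2.mk_isDiag_iff] using he
    refine ⟨u, w, hne, fun x => ?_⟩
    rw [chi, Finset.prod_pair hne]
    simp [edgeTerm]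

lemma sum_ind_expand {J g : (V → Bool) → ℝ} {c : Finset V → ℝ}
    (hJ : ∀ y, J y = ∑ A : Finset V, c A * chi A y) :
    ∑ y : V → Bool, J y * g y = ∑ A : Finset V, c A * ∑ y : V → Bool, chi A y * g y := by
  calc ∑ y : V → Bool, J y * g y
      = ∑ y : V → Bool, ∑ A : Finset V, c A * (chi A y * g y) := by
        refine Finset.sum_congr rfl fun y _ => ?_
        rw [hJ y, Finset.sum_mul]
        exact Finset.sum_congr rfl fun A _ => by ring
    _ = ∑ A : Finset V, ∑ y : V → Bool, c A * (chi A y * g y) := Finset.sum_comm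
    _ = ∑ A : Finset V, c A * ∑ y : V → Bool, chi A y * g y := by
        exact Finset.sum_congr rfl fun A _ => (Finset.mul_sum _ _ _).symm

end GKSaux

/-- **Monotonicity in `t` of plus-boundary edge correlations.**
On a finite rooted tree `(T,o)` with `β ≥ 0` and nonnegative fields `B`, for
every neighbor `i` of `o` and every `t ≥ 1`,
`⟨x_o x_i⟩_{ν_{t+1}} ≤ ⟨x_o x_i⟩_{ν_t}`. -/
theorem plus_boundary_correlation_antitone (T : SimpleGraph V) (hT : T.IsTree)
    (β : ℝ) (hβ : 0 ≤ β) (B : V → ℝ) (hB : ∀ v, 0 ≤ B v)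
    (o i : V) (hoi : T.Adj o i) (t : ℕ) (ht : 1 ≤ t) :
    plusCondExp T β B o (t + 1) (fun x => spin (x o) * spin (x i)) ≤
      plusCondExp T β B o t (fun x => spin (x o) * spin (x i)) := by
  classical
  open GKSaux in
  have hne : o ≠ i := hoi.ne
  have hchiD : ∀ x : V → Bool, spin (x o) * spin (x i) = GKSaux.chi {o, i} x := by
    intro x; rw [GKSaux.chi, Finset.prod_pair hne]
  set D : Finset V := {o, i} with hD
  set W : (V → Bool) → ℝ := fun x =>
    (∏ v ∈ Finset.univ.filter (fun v => t + 1 ≤ T.dist o v), ((1 + spin (x v)) / 2)) *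
    ((∏ e ∈ T.edgeFinset, (Real.cosh β + Real.sinh β * edgeTerm x e)) *
      ∏ v : V, (Real.cosh (B v) + Real.sinh (B v) * spin (x v))) with hWdef
  set J : (V → Bool) → ℝ := fun x =>
    ∏ v ∈ Finset.univ.filter (fun v => T.dist o v = t), ((1 + spin (x v)) / 2) with hJdef
  have hW : ∀ x : V → Bool,
      (if ∀ v, t + 1 ≤ T.dist o v → x v = true then Real.exp (ham T β B x) else 0) = W x := by
    intro x
    simp only [hWdef]
    rw [GKSaux.prod_ind, ← GKSaux.exp_ham]
    have hiff : (∀ v ∈ Finset.univ.filter (fun v => t + 1 ≤ T.dist o v), x v = true)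
        ↔ (∀ v, t + 1 ≤ T.dist o v → x v = true) := by
      constructor
      · intro h v hv; exact h v (by simp; omega)
      · intro h v hv; exact h v (by simpa using hv)
    by_cases h : ∀ v, t + 1 ≤ T.dist o v → x v = true
    · rw [if_pos h, if_pos (hiff.mpr h), one_mul]
    · rw [if_neg h, if_neg (fun hh => h (hiff.mp hh)), zero_mul]
  have hJW : ∀ x : V → Bool,
      (if ∀ v, t ≤ T.dist o v → x v = true then Real.exp (ham T β B x) else 0)
        = J x * W x := by
    intro x
    rw [← hW x]
    simp only [hJdef]
    rw [GKSaux.prod_ind]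
    have hiff2 : (∀ v ∈ Finset.univ.filter (fun v => T.dist o v = t), x v = true)
        ↔ (∀ v, T.dist o v = t → x v = true) := by
      constructor
      · intro h v hv; exact h v (by simp [hv])
      · intro h v hv; exact h v (by simpa using hv)
    by_cases h1 : ∀ v, t + 1 ≤ T.dist o v → x v = true
    · by_cases h2 : ∀ v, T.dist o v = t → x v = true
      · have hc : ∀ v, t ≤ T.dist o v → x v = true := by
          intro v hv
          rcases eq_or_lt_of_le hv with he | hl
          · exact h2 v he.symm
          · exact h1 v hl
        rw [if_pos hc, if_pos (hiff2.mpr h2), if_pos h1, one_mul]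
      · have hc : ¬ ∀ v, t ≤ T.dist o v → x v = true :=
          fun hc => h2 fun v hv => hc v (le_of_eq hv.symm)
        rw [if_neg hc, if_neg (fun hh => h2 (hiff2.mp hh)), zero_mul]
    · have hc : ¬ ∀ v, t ≤ T.dist o v → x v = true :=
        fun hc => h1 fun v hv => hc v (le_trans (Nat.le_succ t) hv)
      rw [if_neg hc, if_neg h1, mul_zero]
  have hPW : GKSaux.Paired W := by
    simp only [hWdef]
    refine GKSaux.paired_mul ?_ (GKSaux.paired_mul ?_ ?_)
    · refine GKSaux.paired_prod _ _ fun v _ => ?_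
      have hfe : (fun x : V → Bool => (1 + spin (x v)) / 2)
           = fun x => (1/2 : ℝ) + (1/2 : ℝ) * GKSaux.chi {v} x := by
        funext x; rw [GKSaux.chi, Finset.prod_singleton]; ring
      rw [hfe]
      exact GKSaux.paired_factor {v} (by norm_num) (by norm_num)
    · refine GKSaux.paired_prod _ _ fun e he => ?_
      have hnd : ¬ e.IsDiag := by
        rw [SimpleGraph.mem_edgeFinset] at he
        exact T.not_isDiag_of_mem_edgeSet he
      obtain ⟨u, w, huw, hrep⟩ := GKSaux.edgeTerm_eq_chi e hnd
      have hfe : (fun x : V → Bool => Real.cosh β + Real.sinh β * edgeTerm x e)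
           = fun x => Real.cosh β + Real.sinh β * GKSaux.chi {u, w} x := by
        funext x; rw [hrep x]
      rw [hfe]
      exact GKSaux.paired_factor _ (GKSaux.sinh_nonneg' hβ) (GKSaux.sinh_le_cosh' β)
    · refine GKSaux.paired_prod _ _ fun v _ => ?_
      have hfe : (fun x : V → Bool => Real.cosh (B v) + Real.sinh (B v) * spin (x v))
           = fun x => Real.cosh (B v) + Real.sinh (B v) * GKSaux.chi {v} x := by
        funext x; rw [GKSaux.chi, Finset.prod_singleton]
      rw [hfe]
      exact GKSaux.paired_factor _ (GKSaux.sinh_nonneg' (hB v)) (GKSaux.sinh_le_cosh' _)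
  have hCJ : GKSaux.Cone J := by
    simp only [hJdef]
    refine GKSaux.cone_prod _ _ fun v _ => ?_
    have hfe : (fun x : V → Bool => (1 + spin (x v)) / 2)
         = fun x => (1/2 : ℝ) + (1/2 : ℝ) * GKSaux.chi {v} x := by
      funext x; rw [GKSaux.chi, Finset.prod_singleton]; ring
    rw [hfe]
    exact GKSaux.cone_add (GKSaux.cone_const _ (by norm_num))
      (GKSaux.cone_smul_chi _ (by norm_num) {v})
  -- positivity of the two denominators
  have hterm : ∀ (s : ℕ) (x : V → Bool),
      0 ≤ (if ∀ v, s ≤ T.dist o v → x v = true then Real.exp (ham T β B x) else 0) := by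
    intro s x
    by_cases h : ∀ v, s ≤ T.dist o v → x v = true
    · rw [if_pos h]; positivity
    · rw [if_neg h]
  have hdpos : ∀ s : ℕ,
      0 < ∑ x : V → Bool,
        (if ∀ v, s ≤ T.dist o v → x v = true then Real.exp (ham T β B x) else 0) := by
    intro s
    refine Finset.sum_pos' (fun x _ => hterm s x) ⟨fun _ => true, Finset.mem_univ _, ?_⟩
    rw [if_pos (fun v _ => rfl)]
    positivity
  have hd1 := hdpos (t + 1)
  have hdt := hdpos t
  rw [plusCondExp, plusCondExp, div_le_div_iff₀ hd1 hdt]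
  have hpull : ∀ (s : ℕ) (x : V → Bool),
      (if ∀ v, s ≤ T.dist o v → x v = true
          then (fun x => spin (x o) * spin (x i)) x * Real.exp (ham T β B x) else 0)
        = GKSaux.chi D x *
          (if ∀ v, s ≤ T.dist o v → x v = true then Real.exp (ham T β B x) else 0) := by
    intro s x
    by_cases h : ∀ v, s ≤ T.dist o v → x v = true
    · rw [if_pos h, if_pos h]
      exact congrArg (fun z => z * Real.exp (ham T β B x)) (hchiD x)
    · rw [if_neg h, if_neg h, mul_zero]
  rw [Finset.sum_congr rfl fun x _ => hpull (t+1) x,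
      Finset.sum_congr rfl fun x _ => hpull t x,
      Finset.sum_congr rfl fun x _ => hW x,
      Finset.sum_congr rfl fun x _ => hJW x,
      Finset.sum_congr rfl fun (x : V → Bool) (_ : x ∈ Finset.univ) =>
        congrArg (GKSaux.chi D x * ·) (hW x),
      Finset.sum_congr rfl fun (x : V → Bool) (_ : x ∈ Finset.univ) =>
        congrArg (GKSaux.chi D x * ·) (hJW x)]
  obtain ⟨c, hc, hrep⟩ := hCJ
  have e1 : ∑ y : V → Bool, J y * W y
      = ∑ A : Finset V, c A * ∑ y : V → Bool, GKSaux.chi A y * W y :=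
    GKSaux.sum_ind_expand hrep
  have e2 : ∑ x : V → Bool, GKSaux.chi D x * (J x * W x)
      = ∑ A : Finset V, c A * ∑ x : V → Bool,
          GKSaux.chi D x * GKSaux.chi A x * W x := by
    calc ∑ x : V → Bool, GKSaux.chi D x * (J x * W x)
        = ∑ x : V → Bool, J x * (GKSaux.chi D x * W x) := by
          exact Finset.sum_congr rfl fun x _ => by ring
      _ = ∑ A : Finset V, c A * ∑ x : V → Bool,
            GKSaux.chi A x * (GKSaux.chi D x * W x) := GKSaux.sum_ind_expand hrep
      _ = ∑ A : Finset V, c A * ∑ x : V → Bool,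
            GKSaux.chi D x * GKSaux.chi A x * W x := by
          refine Finset.sum_congr rfl fun A _ => ?_
          congr 1
          exact Finset.sum_congr rfl fun x _ => by ring
  rw [e1, e2, Finset.mul_sum, Finset.sum_mul]
  refine Finset.sum_le_sum fun A _ => ?_
  have hg := GKSaux.gks2 hPW D A
  calc (∑ x : V → Bool, GKSaux.chi D x * W x) * (c A * ∑ y : V → Bool, GKSaux.chi A y * W y)
      = c A * ((∑ x : V → Bool, GKSaux.chi D x * W x) *
          (∑ y : V → Bool, GKSaux.chi A y * W y)) := by ring
    _ ≤ c A * ((∑ x : V → Bool, GKSaux.chi D x * GKSaux.chi A x * W x) *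
          (∑ y : V → Bool, W y)) := mul_le_mul_of_nonneg_left hg (hc A)
    _ = (c A * ∑ x : V → Bool, GKSaux.chi D x * GKSaux.chi A x * W x) *
          (∑ y : V → Bool, W y) := by ring
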